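/- Let α, β ∈ [1/2, 1]. The double inequality C̄(α·a + (1−α)·b, α·b + (1−α)·a) < T(a,b) < C̄(β·a + (1−β)·b, β·b + (1−β)·a) holds for all positive real numbers a, b with a ≠ b if and only if α ≤ (1 + √(12/π − 3))/2 and β = 1. -/

import Mathlib

open Real

/-- The Seiffert mean of two positive reals. -/
noncomputable def seiffertT (a b : ℝ) : ℝ := (a - b) / (2 * Real.arctan ((a - b) / (a + b)))

/-- The centroidal mean of two positive reals. -/
noncomputable def centroidalMean (a b : ℝ) : ℝ := 2 * (a ^ 2 + a * b + b ^ 2) / (3 * (a + b))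

namespace Stmt4Aux

noncomputable def cc : ℝ := 12 / π - 3

lemma cc_pos : 0 < cc := by
  have h := pi_lt_d2
  have h0 := pi_pos
  unfold cc; rw [sub_pos, lt_div_iff₀ h0]; nlinarith

lemma cc_lt_one : cc < 1 := by
  have h := pi_gt_three
  have h0 := pi_pos
  unfold cc; rw [sub_lt_iff_lt_add, div_lt_iff₀ h0]; nlinarith

lemma arctan_pos' {u : ℝ} (hu : 0 < u) : 0 < arctan u := by
  have := arctan_strictMono hu
  simpa using this

lemma hasDerivAt_psi (x : ℝ) :
    HasDerivAt (fun u : ℝ => arctan u - u / (1 + u ^ 2))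
      (2 * x ^ 2 / (1 + x ^ 2) ^ 2) x := by
  have hne : (1 + x ^ 2) ≠ 0 := by positivity
  have h2 : HasDerivAt (fun u : ℝ => 1 + u ^ 2) (2 * x) x := by
    simpa using (hasDerivAt_pow 2 x).const_add 1
  have h1 : HasDerivAt (fun u : ℝ => u / (1 + u ^ 2))
      ((1 * (1 + x ^ 2) - x * (2 * x)) / (1 + x ^ 2) ^ 2) x :=
    (hasDerivAt_id x).div h2 hne
  have := (Real.hasDerivAt_arctan x).sub h1
  refine this.congr_deriv ?_
  field_simp
  ring

lemma psi_pos {u : ℝ} (hu : 0 < u) : u / (1 + u ^ 2) < arctan u := by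
  have mono : StrictMonoOn (fun u : ℝ => arctan u - u / (1 + u ^ 2)) (Set.Ici 0) := by
    apply strictMonoOn_of_deriv_pos (convex_Ici 0)
    · exact fun x _ => (hasDerivAt_psi x).differentiableAt.continuousAt.continuousWithinAt
    · intro x hx
      rw [interior_Ici] at hx
      rw [(hasDerivAt_psi x).deriv]
      have : (0:ℝ) < x := hx
      positivity
  have := mono (Set.self_mem_Ici) (Set.mem_Ici.mpr hu.le) hu
  simp only [arctan_zero] at this
  linarith [this]

lemma L2 {u : ℝ} (hu : 0 < u) : 3 * u < (3 + u ^ 2) * arctan u := by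
  have mono : StrictMonoOn (fun u : ℝ => (3 + u ^ 2) * arctan u - 3 * u) (Set.Ici 0) := by
    apply strictMonoOn_of_deriv_pos (convex_Ici 0)
    · intro x _
      have h2 : HasDerivAt (fun u : ℝ => 3 + u ^ 2) (2 * x) x := by
        simpa using (hasDerivAt_pow 2 x).const_add 3
      exact ((h2.mul (Real.hasDerivAt_arctan x)).sub
        ((hasDerivAt_id x).const_mul 3)).differentiableAt.continuousAt.continuousWithinAt
    · intro x hx
      rw [interior_Ici] at hx
      have hxpos : (0:ℝ) < x := hx
      have h2 : HasDerivAt (fun u : ℝ => 3 + u ^ 2) (2 * x) x := by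
        simpa using (hasDerivAt_pow 2 x).const_add 3
      have hd : HasDerivAt (fun u : ℝ => (3 + u ^ 2) * arctan u - 3 * u)
          (2 * x * arctan x + (3 + x ^ 2) * (1 / (1 + x ^ 2)) - 3 * 1) x :=
        (h2.mul (Real.hasDerivAt_arctan x)).sub ((hasDerivAt_id x).const_mul 3)
      rw [hd.deriv]
      have hψ := psi_pos hxpos
      have hne : (0:ℝ) < 1 + x ^ 2 := by positivity
      have key : 2 * x * arctan x > 2 * x * (x / (1 + x ^ 2)) := by
        exact mul_lt_mul_of_pos_left hψ (by positivity)
      have : (3 + x ^ 2) * (1 / (1 + x ^ 2)) - 3 = -(2 * x * (x / (1 + x ^ 2))) := by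
        field_simp
        ring
      nlinarith [key, this]
  have := mono (Set.self_mem_Ici) (Set.mem_Ici.mpr hu.le) hu
  simp only [arctan_zero] at this
  linarith

lemma quintic {u : ℝ} (hu : 0 ≤ u) : arctan u ≤ u - u ^ 3 / 3 + u ^ 5 / 5 := by
  have mono : MonotoneOn (fun u : ℝ => u - u ^ 3 / 3 + u ^ 5 / 5 - arctan u) (Set.Ici 0) := by
    have hd : ∀ x : ℝ, HasDerivAt (fun u : ℝ => u - u ^ 3 / 3 + u ^ 5 / 5 - arctan u)
        (1 - 3 * x ^ 2 / 3 + 5 * x ^ 4 / 5 - 1 / (1 + x ^ 2)) x := by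
      intro x
      have h3 : HasDerivAt (fun u : ℝ => u ^ 3 / 3) (3 * x ^ 2 / 3) x := by
        simpa using (hasDerivAt_pow 3 x).div_const 3
      have h5 : HasDerivAt (fun u : ℝ => u ^ 5 / 5) (5 * x ^ 4 / 5) x := by
        simpa using (hasDerivAt_pow 5 x).div_const 5
      exact (((hasDerivAt_id x).sub h3).add h5).sub (Real.hasDerivAt_arctan x)
    apply monotoneOn_of_deriv_nonneg (convex_Ici 0)
    · exact fun x _ => ((hd x).differentiableAt.continuousAt.continuousWithinAt)
    · exact fun x _ => (hd x).differentiableAt.differentiableWithinAt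
    · intro x _
      rw [(hd x).deriv]
      have hne : (0:ℝ) < 1 + x ^ 2 := by positivity
      rw [sub_nonneg, div_le_iff₀ hne]
      nlinarith [sq_nonneg (x^3), sq_nonneg x, sq_nonneg (x^2)]
  have := mono (Set.self_mem_Ici) (Set.mem_Ici.mpr hu) hu
  simp only [arctan_zero] at this
  linarith

noncomputable def kf : ℝ → ℝ := fun u => (3 - cc) * u / (1 + u ^ 2) - 2 * cc * arctan u

noncomputable def hf : ℝ → ℝ := fun u => 3 * u - (3 + cc * u ^ 2) * arctan u

lemma hasDerivAt_kf (x : ℝ) :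
    HasDerivAt kf ((3 - 3 * cc - (3 + cc) * x ^ 2) / (1 + x ^ 2) ^ 2) x := by
  have hne : (1 + x ^ 2) ≠ 0 := by positivity
  have h2 : HasDerivAt (fun u : ℝ => 1 + u ^ 2) (2 * x) x := by
    simpa using (hasDerivAt_pow 2 x).const_add 1
  have h1 : HasDerivAt (fun u : ℝ => (3 - cc) * u) (3 - cc) x := by
    simpa using (hasDerivAt_id x).const_mul (3 - cc)
  have hq : HasDerivAt (fun u : ℝ => (3 - cc) * u / (1 + u ^ 2))
      (((3 - cc) * (1 + x ^ 2) - (3 - cc) * x * (2 * x)) / (1 + x ^ 2) ^ 2) x :=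
    h1.div h2 hne
  have := hq.sub ((Real.hasDerivAt_arctan x).const_mul (2 * cc))
  refine this.congr_deriv ?_
  field_simp
  ring

lemma hasDerivAt_hf (x : ℝ) : HasDerivAt hf (x * kf x) x := by
  have h2 : HasDerivAt (fun u : ℝ => 3 + cc * u ^ 2) (cc * (2 * x)) x := by
    simpa using ((hasDerivAt_pow 2 x).const_mul cc).const_add 3
  have hd : HasDerivAt hf
      (3 * 1 - (cc * (2 * x) * arctan x + (3 + cc * x ^ 2) * (1 / (1 + x ^ 2)))) x :=
    (((hasDerivAt_id x).const_mul 3).sub (h2.mul (Real.hasDerivAt_arctan x)))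
  convert hd using 1
  have hne : (1 + x ^ 2) ≠ 0 := by positivity
  unfold kf
  field_simp
  ring

noncomputable def t0 : ℝ := Real.sqrt ((3 - 3 * cc) / (3 + cc))

lemma t0_sq : t0 ^ 2 = (3 - 3 * cc) / (3 + cc) := by
  have h1 : (0:ℝ) ≤ (3 - 3 * cc) / (3 + cc) := by
    have := cc_pos; have := cc_lt_one
    apply div_nonneg <;> nlinarith
  exact Real.sq_sqrt h1

lemma t0_pos : 0 < t0 := by
  have h1 : (0:ℝ) < (3 - 3 * cc) / (3 + cc) := by
    have := cc_pos; have := cc_lt_one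
    apply div_pos <;> nlinarith
  exact Real.sqrt_pos.mpr h1

lemma t0_lt_one : t0 < 1 := by
  have h1 : (3 - 3 * cc) / (3 + cc) < 1 := by
    have := cc_pos; have := cc_lt_one
    rw [div_lt_one (by nlinarith)]; nlinarith
  have h0 : (0:ℝ) ≤ (3 - 3 * cc) / (3 + cc) := by
    have := cc_pos; have := cc_lt_one
    apply div_nonneg <;> nlinarith
  calc t0 < Real.sqrt 1 := by
        apply Real.sqrt_lt_sqrt h0 h1
    _ = 1 := Real.sqrt_one

lemma kf_mono : StrictMonoOn kf (Set.Icc 0 t0) := by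
  apply strictMonoOn_of_deriv_pos (convex_Icc 0 t0)
  · exact fun x _ => (hasDerivAt_kf x).differentiableAt.continuousAt.continuousWithinAt
  · intro x hx
    rw [interior_Icc] at hx
    rw [(hasDerivAt_kf x).deriv]
    have hx0 : 0 < x := hx.1
    have hx1 : x < t0 := hx.2
    have hsq : x ^ 2 < (3 - 3 * cc) / (3 + cc) := by
      rw [← t0_sq]
      exact pow_lt_pow_left₀ hx1 hx0.le (by norm_num)
    have hc := cc_pos
    have hnum : 0 < 3 - 3 * cc - (3 + cc) * x ^ 2 := by
      rw [lt_div_iff₀ (by nlinarith : (0:ℝ) < 3 + cc)] at hsq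
      nlinarith
    positivity

lemma kf_anti : StrictAntiOn kf (Set.Icc t0 1) := by
  apply strictAntiOn_of_deriv_neg (convex_Icc t0 1)
  · exact fun x _ => (hasDerivAt_kf x).differentiableAt.continuousAt.continuousWithinAt
  · intro x hx
    rw [interior_Icc] at hx
    rw [(hasDerivAt_kf x).deriv]
    have hx0 : t0 < x := hx.1
    have hsq : (3 - 3 * cc) / (3 + cc) < x ^ 2 := by
      rw [← t0_sq]
      exact pow_lt_pow_left₀ hx0 t0_pos.le (by norm_num)
    have hc := cc_pos
    have hnum : 3 - 3 * cc - (3 + cc) * x ^ 2 < 0 := by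
      rw [div_lt_iff₀ (by nlinarith : (0:ℝ) < 3 + cc)] at hsq
      nlinarith
    have hden : (0:ℝ) < (1 + x ^ 2) ^ 2 := by positivity
    exact div_neg_of_neg_of_pos hnum hden

lemma kf_zero : kf 0 = 0 := by simp [kf]

lemma kf_one_neg : kf 1 < 0 := by
  unfold kf cc
  rw [Real.arctan_one]
  have h0 := pi_pos
  have h1 := pi_lt_d2
  have h2 := pi_gt_d6
  have hπ : π ≠ 0 := ne_of_gt h0
  have hd : (12:ℝ) / π * π = 12 := by field_simp
  nlinarith [sq_nonneg (π - 22/7), mul_pos h0 h0]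

lemma kf_t0_pos : 0 < kf t0 := by
  have := kf_mono (Set.left_mem_Icc.mpr t0_pos.le)
    (Set.right_mem_Icc.mpr t0_pos.le) t0_pos
  rw [kf_zero] at this
  exact this

lemma exists_t1 : ∃ t1 : ℝ, t1 ∈ Set.Ioo t0 1 ∧ kf t1 = 0 := by
  have hcont : ContinuousOn kf (Set.Icc t0 1) :=
    fun x _ => (hasDerivAt_kf x).differentiableAt.continuousAt.continuousWithinAt
  have h0 : (0:ℝ) ∈ Set.Icc (kf 1) (kf t0) := ⟨kf_one_neg.le, kf_t0_pos.le⟩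
  have := intermediate_value_Icc' t0_lt_one.le hcont h0
  obtain ⟨t1, ht1, hkt1⟩ := this
  refine ⟨t1, ⟨?_, ?_⟩, hkt1⟩
  · rcases eq_or_lt_of_le ht1.1 with h | h
    · exfalso; rw [← h] at hkt1; exact kf_t0_pos.ne' hkt1
    · exact h
  · rcases eq_or_lt_of_le ht1.2 with h | h
    · exfalso; rw [h] at hkt1; exact absurd hkt1 (ne_of_lt kf_one_neg)
    · exact h

lemma hf_one : hf 1 = 0 := by
  unfold hf cc
  rw [Real.arctan_one]
  have h0 := pi_pos
  field_simp
  ring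

lemma L1 {u : ℝ} (hu : 0 < u) (hu1 : u < 1) : (3 + cc * u ^ 2) * arctan u < 3 * u := by
  obtain ⟨t1, ht1, hk1⟩ := exists_t1
  have hkpos : ∀ s : ℝ, 0 < s → s < t1 → 0 < kf s := by
    intro s hs hst
    rcases le_or_gt s t0 with h | h
    · have := kf_mono (Set.left_mem_Icc.mpr t0_pos.le) ⟨hs.le, h⟩ hs
      rwa [kf_zero] at this
    · have := kf_anti ⟨h.le, (hst.trans ht1.2).le⟩ ⟨ht1.1.le, ht1.2.le⟩ hst
      rw [hk1] at this
      exact this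
  have hkneg : ∀ s : ℝ, t1 < s → s < 1 → kf s < 0 := by
    intro s hst hs1
    have := kf_anti ⟨ht1.1.le, ht1.2.le⟩ ⟨(ht1.1.trans hst).le, hs1.le⟩ hst
    rwa [hk1] at this
  have hmono : StrictMonoOn hf (Set.Icc 0 t1) := by
    apply strictMonoOn_of_deriv_pos (convex_Icc 0 t1)
    · exact fun x _ => (hasDerivAt_hf x).differentiableAt.continuousAt.continuousWithinAt
    · intro x hx
      rw [interior_Icc] at hx
      rw [(hasDerivAt_hf x).deriv]
      exact mul_pos hx.1 (hkpos x hx.1 hx.2)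
  have hanti : StrictAntiOn hf (Set.Icc t1 1) := by
    apply strictAntiOn_of_deriv_neg (convex_Icc t1 1)
    · exact fun x _ => (hasDerivAt_hf x).differentiableAt.continuousAt.continuousWithinAt
    · intro x hx
      rw [interior_Icc] at hx
      rw [(hasDerivAt_hf x).deriv]
      exact mul_neg_of_pos_of_neg (t0_pos.trans (ht1.1.trans hx.1)) (hkneg x hx.1 hx.2)
  have hf0 : hf 0 = 0 := by simp [hf]
  have hfu : 0 < hf u := by
    rcases le_or_gt u t1 with h | h
    · have := hmono (Set.left_mem_Icc.mpr (t0_pos.trans ht1.1).le) ⟨hu.le, h⟩ hu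
      rwa [hf0] at this
    · have := hanti ⟨h.le, hu1.le⟩ (Set.right_mem_Icc.mpr (ht1.2.le)) hu1
      rw [hf_one] at this
      linarith
  unfold hf at hfu
  linarith

lemma seiffertT_comm (a b : ℝ) : seiffertT a b = seiffertT b a := by
  unfold seiffertT
  have h1 : (b - a) / (b + a) = -((a - b) / (a + b)) := by rw [add_comm b a]; ring
  rw [h1, Real.arctan_neg, show b - a = -(a - b) by ring, mul_neg, neg_div_neg_eq]

lemma centroidalMean_comm (a b : ℝ) : centroidalMean a b = centroidalMean b a := by
  unfold centroidalMean
  ring_nf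

lemma cent_lt_seiffert_iff (γ a b : ℝ) (hb : 0 < b) (h : b < a) :
    centroidalMean (γ * a + (1 - γ) * b) (γ * b + (1 - γ) * a) < seiffertT a b ↔
      (3 + (2 * γ - 1) ^ 2 * ((a - b) / (a + b)) ^ 2) * arctan ((a - b) / (a + b))
        < 3 * ((a - b) / (a + b)) := by
  have hs : 0 < a + b := by linarith
  set u := (a - b) / (a + b) with hu
  have hu0 : 0 < u := div_pos (by linarith) hs
  have harc : 0 < arctan u := arctan_pos' hu0
  have e1 : seiffertT a b = (a + b) * u / (2 * arctan u) := by
    unfold seiffertT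
    rw [← hu]
    congr 1
    rw [hu]; field_simp
  have e2 : centroidalMean (γ * a + (1 - γ) * b) (γ * b + (1 - γ) * a)
      = (a + b) * (3 + (2 * γ - 1) ^ 2 * u ^ 2) / 6 := by
    unfold centroidalMean
    rw [hu]
    have hne : a + b ≠ 0 := ne_of_gt hs
    rw [show γ * a + (1 - γ) * b + (γ * b + (1 - γ) * a) = a + b by ring]
    rw [div_eq_div_iff (mul_ne_zero (by norm_num) hne) (by norm_num : (6:ℝ) ≠ 0)]
    field_simp [hne]
    ring
  rw [e1, e2]
  rw [mul_div_assoc, mul_div_assoc, mul_lt_mul_iff_right₀ hs,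
    div_lt_div_iff₀ (by norm_num) (by positivity)]
  constructor <;> intro H <;> nlinarith [H, harc]

lemma seiffert_lt_cent_iff (γ a b : ℝ) (hb : 0 < b) (h : b < a) :
    seiffertT a b < centroidalMean (γ * a + (1 - γ) * b) (γ * b + (1 - γ) * a) ↔
      3 * ((a - b) / (a + b)) <
        (3 + (2 * γ - 1) ^ 2 * ((a - b) / (a + b)) ^ 2) * arctan ((a - b) / (a + b)) := by
  have hs : 0 < a + b := by linarith
  set u := (a - b) / (a + b) with hu
  have hu0 : 0 < u := div_pos (by linarith) hs
  have harc : 0 < arctan u := arctan_pos' hu0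
  have e1 : seiffertT a b = (a + b) * u / (2 * arctan u) := by
    unfold seiffertT
    rw [← hu]
    congr 1
    rw [hu]; field_simp
  have e2 : centroidalMean (γ * a + (1 - γ) * b) (γ * b + (1 - γ) * a)
      = (a + b) * (3 + (2 * γ - 1) ^ 2 * u ^ 2) / 6 := by
    unfold centroidalMean
    rw [hu]
    have hne : a + b ≠ 0 := ne_of_gt hs
    rw [show γ * a + (1 - γ) * b + (γ * b + (1 - γ) * a) = a + b by ring]
    rw [div_eq_div_iff (mul_ne_zero (by norm_num) hne) (by norm_num : (6:ℝ) ≠ 0)]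
    field_simp [hne]
    ring
  rw [e1, e2]
  rw [mul_div_assoc, mul_div_assoc, mul_lt_mul_iff_right₀ hs,
    div_lt_div_iff₀ (by positivity) (by norm_num)]
  constructor <;> intro H <;> nlinarith [H, harc]

end Stmt4Aux

set_option maxHeartbeats 2000000 in
open Stmt4Aux in
theorem stmt_4 (α β : ℝ) (hα : α ∈ Set.Icc (1 / 2 : ℝ) 1) (hβ : β ∈ Set.Icc (1 / 2 : ℝ) 1) :
    (∀ a b : ℝ, 0 < a → 0 < b → a ≠ b →
        centroidalMean (α * a + (1 - α) * b) (α * b + (1 - α) * a) < seiffertT a b ∧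
        seiffertT a b < centroidalMean (β * a + (1 - β) * b) (β * b + (1 - β) * a)) ↔
      (α ≤ (1 + Real.sqrt (12 / π - 3)) / 2 ∧ β = 1) := by
  obtain ⟨hα1, hα2⟩ := hα
  obtain ⟨hβ1, hβ2⟩ := hβ
  have hsqrtcc : Real.sqrt (12 / π - 3) = Real.sqrt cc := rfl
  constructor
  · intro H
    constructor
    · -- necessity of the α bound
      by_contra hcon
      push_neg at hcon
      have hl : Real.sqrt cc < 2 * α - 1 := by
        rw [← hsqrtcc]; linarith
      have hsq : cc < (2 * α - 1) ^ 2 := by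
        have h2 := Real.sqrt_nonneg cc
        calc cc = Real.sqrt cc ^ 2 := (Real.sq_sqrt cc_pos.le).symm
          _ < (2 * α - 1) ^ 2 := by nlinarith
      have hGcont : Continuous (fun u : ℝ => (3 + (2 * α - 1) ^ 2 * u ^ 2) * arctan u - 3 * u) :=
        ((continuous_const.add (continuous_const.mul (continuous_pow 2))).mul
          Real.continuous_arctan).sub (continuous_const.mul continuous_id)
      have hG1 : 0 < (3 + (2 * α - 1) ^ 2 * (1:ℝ) ^ 2) * arctan 1 - 3 * 1 := by
        rw [Real.arctan_one]
        have h0 := pi_pos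
        have hccdef : cc = 12 / π - 3 := rfl
        have h12 : 12 / π * π = 12 := div_mul_cancel₀ _ (ne_of_gt h0)
        have hlt : 12 / π < 3 + (2 * α - 1) ^ 2 := by rw [hccdef] at hsq; linarith
        nlinarith [mul_pos h0 (sub_pos.mpr hlt)]
      have hev : ∀ᶠ u in nhdsWithin (1:ℝ) (Set.Iio 1),
          (0 < (3 + (2 * α - 1) ^ 2 * u ^ 2) * arctan u - 3 * u) ∧ u ∈ Set.Ioo (0:ℝ) 1 := by
        apply Filter.Eventually.and
        · exact (hGcont.continuousAt.eventually (eventually_gt_nhds hG1)).filter_mono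
            nhdsWithin_le_nhds
        · exact Filter.eventually_of_mem
            (Ioo_mem_nhdsLT_of_mem (⟨by norm_num, le_refl 1⟩ : (1:ℝ) ∈ Set.Ioc 0 1))
            (fun x hx => hx)
      obtain ⟨u, hGu, hu0, hu1⟩ := hev.exists
      have hb : 0 < 1 - u := by linarith
      have ha : 0 < 1 + u := by linarith
      have hne : (1 + u) ≠ (1 - u) := by intro hE; linarith
      have hH := (H (1 + u) (1 - u) ha hb hne).1
      rw [cent_lt_seiffert_iff α (1 + u) (1 - u) hb (by linarith)] at hH
      rw [show (1 + u - (1 - u)) / (1 + u + (1 - u)) = u by ring] at hH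
      linarith
    · -- necessity of β = 1
      by_contra hne1
      have hβlt : β < 1 := lt_of_le_of_ne hβ2 hne1
      have hm0 : 0 ≤ 2 * β - 1 := by linarith
      have hmsq : (2 * β - 1) ^ 2 < 1 := by nlinarith
      obtain ⟨u, hu0, huhalf, huM⟩ :
          ∃ u : ℝ, 0 < u ∧ u ≤ 1/2 ∧ u ≤ 1 - (2 * β - 1) ^ 2 :=
        ⟨min (1/2 : ℝ) (1 - (2 * β - 1) ^ 2),
          lt_min (by norm_num) (by nlinarith), min_le_left _ _, min_le_right _ _⟩
      have hu1 : u < 1 := lt_of_le_of_lt huhalf (by norm_num)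
      have harc := quintic hu0.le
      have key : (3 + (2 * β - 1) ^ 2 * u ^ 2) * arctan u ≤ 3 * u := by
        have h1 : (3 + (2 * β - 1) ^ 2 * u ^ 2) * arctan u
            ≤ (3 + (2 * β - 1) ^ 2 * u ^ 2) * (u - u ^ 3 / 3 + u ^ 5 / 5) :=
          mul_le_mul_of_nonneg_left harc (by positivity)
        have h2 : (3 + (2 * β - 1) ^ 2 * u ^ 2) * (u - u ^ 3 / 3 + u ^ 5 / 5) ≤ 3 * u := by
          have hu3 : (0:ℝ) < u ^ 3 := pow_pos hu0 3
          have hu4 : (0:ℝ) < u ^ 4 := pow_pos hu0 4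
          have e1 : u ^ 3 * ((2 * β - 1) ^ 2 - 1) ≤ u ^ 3 * (-u) :=
            mul_le_mul_of_nonneg_left (by linarith) hu3.le
          have e2 : u ^ 5 ≤ u ^ 4 * (1 / 2) := by nlinarith
          have hcube : u ^ 3 ≤ 1 / 8 := by nlinarith [sq_nonneg u, sq_nonneg (1/2 - u)]
          have e3 : u ^ 7 ≤ u ^ 4 * (1 / 8) := by nlinarith
          have e4 : (2 * β - 1) ^ 2 * u ^ 7 ≤ u ^ 7 := by
            nlinarith [pow_pos hu0 7]
          have e5 : 0 ≤ (2 * β - 1) ^ 2 * u ^ 5 :=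
            mul_nonneg (sq_nonneg _) (pow_pos hu0 5).le
          have expand : (3 + (2 * β - 1) ^ 2 * u ^ 2) * (u - u ^ 3 / 3 + u ^ 5 / 5)
              = 3 * u + u ^ 3 * ((2 * β - 1) ^ 2 - 1) + (3/5) * u ^ 5
                - (1/3) * ((2 * β - 1) ^ 2 * u ^ 5) + (1/5) * ((2 * β - 1) ^ 2 * u ^ 7) := by
            ring
          have e1' : u ^ 3 * ((2 * β - 1) ^ 2 - 1) ≤ -(u ^ 4) := by
            calc u ^ 3 * ((2 * β - 1) ^ 2 - 1) ≤ u ^ 3 * (-u) := e1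
              _ = -(u ^ 4) := by ring
          linarith [expand, e1', e2, e3, e4, e5, hu4.le]
        linarith
      have hH := (H (1 + u) (1 - u) (by linarith) (by linarith) (by intro hE; linarith)).2
      rw [seiffert_lt_cent_iff β (1 + u) (1 - u) (by linarith) (by linarith)] at hH
      rw [show (1 + u - (1 - u)) / (1 + u + (1 - u)) = u by ring] at hH
      linarith
  · rintro ⟨hαle, hβ1'⟩
    subst hβ1'
    have key : ∀ a b : ℝ, 0 < b → b < a →
        centroidalMean (α * a + (1 - α) * b) (α * b + (1 - α) * a) < seiffertT a b ∧
        seiffertT a b < centroidalMean (1 * a + (1 - 1) * b) (1 * b + (1 - 1) * a) := by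
      intro a b hb h
      have hs : 0 < a + b := by linarith
      have hu0 : 0 < (a - b) / (a + b) := div_pos (by linarith) hs
      have hu1 : (a - b) / (a + b) < 1 := by rw [div_lt_one hs]; linarith
      have harc : 0 < arctan ((a - b) / (a + b)) := arctan_pos' hu0
      constructor
      · rw [cent_lt_seiffert_iff α a b hb h]
        have hlamsq : (2 * α - 1) ^ 2 ≤ cc := by
          have h1 : 2 * α - 1 ≤ Real.sqrt cc := by rw [← hsqrtcc]; linarith
          have h2 : 0 ≤ 2 * α - 1 := by linarith
          calc (2 * α - 1) ^ 2 ≤ Real.sqrt cc ^ 2 := by nlinarith [Real.sqrt_nonneg cc]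
            _ = cc := Real.sq_sqrt cc_pos.le
        have hL1 := L1 hu0 hu1
        have hmul : (3 + (2 * α - 1) ^ 2 * ((a - b) / (a + b)) ^ 2) * arctan ((a - b) / (a + b))
            ≤ (3 + cc * ((a - b) / (a + b)) ^ 2) * arctan ((a - b) / (a + b)) := by
          apply mul_le_mul_of_nonneg_right _ harc.le
          nlinarith [sq_nonneg ((a - b) / (a + b))]
        linarith
      · rw [seiffert_lt_cent_iff 1 a b hb h]
        have hL2 := L2 hu0
        have hre : (3 + (2 * (1:ℝ) - 1) ^ 2 * ((a - b) / (a + b)) ^ 2)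
            = 3 + ((a - b) / (a + b)) ^ 2 := by norm_num
        rw [hre]
        exact hL2
    intro a b ha hb hab
    rcases hab.lt_or_gt with h | h
    · have K := key b a ha h
      constructor
      · rw [seiffertT_comm, centroidalMean_comm]
        exact K.1
      · rw [seiffertT_comm, centroidalMean_comm]
        exact K.2
    · exact key a b hb h
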